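/- Let X_1,…,X_m be pairwise commuting Hermitian N×N complex matrices, let P be any N×N complex matrix, let S > 0, and let F : ℝ → ℂ be integrable with Fourier transform F̂(ω) = ∫ F(t) e^{−iωt} dt vanishing for all |ω| ≥ 1. Define H = S^m ∫_{ℝ^m} (∏_{j=1}^m F(S a_j)) · exp(i Σ_j a_j X_j) P exp(−i Σ_j a_j X_j) da. Suppose v_1 and v_2 are joint eigenvectors, X_j v_l = x_j^{(l)} v_l for all j and l ∈ {1,2}, and that |x_j^{(1)} − x_j^{(2)}| ≥ S for some j. Then ⟨v_1, H v_2⟩ = 0. -/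

import Mathlib

open MeasureTheory

lemma exp_apply_eigen {N : ℕ}
    (T : EuclideanSpace ℂ (Fin N) →L[ℂ] EuclideanSpace ℂ (Fin N)) (c : ℂ)
    (v : EuclideanSpace ℂ (Fin N)) (h : T v = c • v) :
    NormedSpace.exp T v = Complex.exp c • v := by
  have hpow : ∀ n : ℕ, (T ^ n) v = c ^ n • v := by
    intro n
    induction n with
    | zero => simp
    | succ n ih =>
      rw [pow_succ, ContinuousLinearMap.mul_apply, h, _root_.map_smul, ih, smul_smul, ← pow_succ']
  rw [NormedSpace.exp_eq_tsum (𝕂 := ℂ)]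
  have hsum : Summable (fun n : ℕ => ((n.factorial : ℂ))⁻¹ • T ^ n) :=
    NormedSpace.expSeries_summable' (𝕂 := ℂ) T
  have := (ContinuousLinearMap.apply ℂ (EuclideanSpace ℂ (Fin N)) v).map_tsum hsum
  simp only [ContinuousLinearMap.apply_apply] at this
  rw [this]
  simp_rw [ContinuousLinearMap.smul_apply, hpow, smul_smul]
  rw [Summable.tsum_smul_const]
  · congr 1
    rw [Complex.exp_eq_exp_ℂ, NormedSpace.exp_eq_tsum (𝕂 := ℂ)]
    simp [smul_eq_mul]
  · simpa [smul_eq_mul] using NormedSpace.expSeries_summable' (𝕂 := ℂ) c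

set_option maxHeartbeats 1000000 in
set_option synthInstance.maxHeartbeats 400000 in
theorem stmt8 {N m : ℕ}
    (X : Fin m → (EuclideanSpace ℂ (Fin N) →L[ℂ] EuclideanSpace ℂ (Fin N)))
    (hXsa : ∀ j, IsSelfAdjoint (X j))
    (hXcomm : ∀ i j, X i * X j = X j * X i)
    (P : EuclideanSpace ℂ (Fin N) →L[ℂ] EuclideanSpace ℂ (Fin N))
    (S : ℝ) (hS : 0 < S)
    (F : ℝ → ℂ) (hFint : Integrable F)
    (hFhat : ∀ ω : ℝ, 1 ≤ |ω| → ∫ t : ℝ, F t * Complex.exp (-(Complex.I * ω * t)) = 0)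
    (v1 v2 : EuclideanSpace ℂ (Fin N)) (x1 x2 : Fin m → ℝ)
    (hv1 : ∀ j, X j v1 = (x1 j : ℂ) • v1) (hv2 : ∀ j, X j v2 = (x2 j : ℂ) • v2)
    (hsep : ∃ j, S ≤ |x1 j - x2 j|) :
    (inner ℂ v1
      ((S ^ m • ∫ a : Fin m → ℝ, (∏ j, F (S * a j)) •
        (NormedSpace.exp (Complex.I • ∑ j, (a j : ℂ) • X j) * P *
          NormedSpace.exp (-(Complex.I • ∑ j, (a j : ℂ) • X j)))) v2) : ℂ) = 0 := by
  classical
  set f : (Fin m → ℝ) → (EuclideanSpace ℂ (Fin N) →L[ℂ] EuclideanSpace ℂ (Fin N)) :=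
      fun a => (∏ j, F (S * a j)) •
        (NormedSpace.exp (Complex.I • ∑ j, (a j : ℂ) • X j) * P *
          NormedSpace.exp (-(Complex.I • ∑ j, (a j : ℂ) • X j))) with hf
  -- eigenvector computation
  have happly : ∀ (a : Fin m → ℝ) (v : EuclideanSpace ℂ (Fin N)) (x : Fin m → ℝ),
      (∀ j, X j v = (x j : ℂ) • v) →
      (Complex.I • ∑ j, (a j : ℂ) • X j) v = (Complex.I * ((∑ j, a j * x j : ℝ) : ℂ)) • v := by
    intro a v x hv
    rw [ContinuousLinearMap.smul_apply, ContinuousLinearMap.sum_apply]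
    have : ∀ j ∈ Finset.univ, ((a j : ℂ) • X j) v = (((a j * x j : ℝ)) : ℂ) • v := by
      intro j _
      rw [ContinuousLinearMap.smul_apply, hv j, smul_smul]
      push_cast
      ring_nf
    rw [Finset.sum_congr rfl this, ← Finset.sum_smul, smul_smul]
    congr 1
    push_cast
    ring
  have hexpv : ∀ (a : Fin m → ℝ) (v : EuclideanSpace ℂ (Fin N)) (x : Fin m → ℝ),
      (∀ j, X j v = (x j : ℂ) • v) →
      NormedSpace.exp (-(Complex.I • ∑ j, (a j : ℂ) • X j)) v
        = Complex.exp (-(Complex.I * ((∑ j, a j * x j : ℝ) : ℂ))) • v := by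
    intro a v x hv
    refine exp_apply_eigen _ _ _ ?_
    rw [ContinuousLinearMap.neg_apply, happly a v x hv, neg_smul]
  have hstar : ∀ a : Fin m → ℝ,
      star (Complex.I • ∑ j, (a j : ℂ) • X j) = -(Complex.I • ∑ j, (a j : ℂ) • X j) := by
    intro a
    have h1 : star (∑ j, (a j : ℂ) • X j) = ∑ j, (a j : ℂ) • X j := by
      rw [star_sum (R := EuclideanSpace ℂ (Fin N) →L[ℂ] EuclideanSpace ℂ (Fin N)) Finset.univ]
      refine Finset.sum_congr rfl fun j _ => ?_
      rw [star_smul, (hXsa j).star_eq]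
      simp
    rw [star_smul, h1, Complex.star_def, Complex.conj_I]
    module
  -- pointwise inner product
  have hpt : ∀ a : Fin m → ℝ, (inner ℂ v1 ((f a) v2) : ℂ)
      = (∏ j, (F (S * a j) * Complex.exp (Complex.I * ((x1 j - x2 j : ℝ) : ℂ) * (a j : ℂ))))
          * inner ℂ v1 (P v2) := by
    intro a
    rw [hf]
    simp only [ContinuousLinearMap.smul_apply, inner_smul_right, ContinuousLinearMap.mul_apply]
    rw [hexpv a v2 x2 hv2, _root_.map_smul, _root_.map_smul, inner_smul_right]
    have hadj : (inner ℂ v1 (NormedSpace.exp (Complex.I • ∑ j, (a j : ℂ) • X j) (P v2)) : ℂ)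
        = Complex.exp (Complex.I * ((∑ j, a j * x1 j : ℝ) : ℂ)) * inner ℂ v1 (P v2) := by
      rw [← ContinuousLinearMap.adjoint_inner_left, ← ContinuousLinearMap.star_eq_adjoint,
        NormedSpace.star_exp, hstar a, hexpv a v1 x1 hv1, inner_smul_left]
      congr 1
      rw [← Complex.exp_conj]
      congr 1
      simp
    rw [hadj]
    rw [Finset.prod_mul_distrib]
    have hprod : (∏ j, Complex.exp (Complex.I * ((x1 j - x2 j : ℝ) : ℂ) * (a j : ℂ)))
        = Complex.exp (-(Complex.I * ((∑ j, a j * x2 j : ℝ) : ℂ)))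
          * Complex.exp (Complex.I * ((∑ j, a j * x1 j : ℝ) : ℂ)) := by
      rw [← Complex.exp_sum, ← Complex.exp_add]
      congr 1
      push_cast
      rw [Finset.mul_sum, Finset.mul_sum, neg_add_eq_sub, ← Finset.sum_sub_distrib]
      exact Finset.sum_congr rfl fun j _ => by ring
    rw [hprod]
    ring
  by_cases hInt : Integrable f
  · -- push inner inside the integral
    set φ : (EuclideanSpace ℂ (Fin N) →L[ℂ] EuclideanSpace ℂ (Fin N)) →L[ℂ] ℂ :=
      (innerSL ℂ v1).comp (ContinuousLinearMap.apply ℂ (EuclideanSpace ℂ (Fin N)) v2) with hφ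
    have hcomm := φ.integral_comp_comm hInt
    have hφap : ∀ T : EuclideanSpace ℂ (Fin N) →L[ℂ] EuclideanSpace ℂ (Fin N),
        φ T = inner ℂ v1 (T v2) := by
      intro T
      rw [hφ]
      simp only [ContinuousLinearMap.comp_apply, ContinuousLinearMap.apply_apply,
        innerSL_apply_apply]
    have hmain : (inner ℂ v1 ((∫ a, f a) v2) : ℂ) = 0 := by
      rw [← hφap, ← hcomm]
      have heq : ∀ a : Fin m → ℝ, φ (f a)
          = (∏ j, (fun t : ℝ => F (S * t) *
              Complex.exp (Complex.I * ((x1 j - x2 j : ℝ) : ℂ) * (t : ℂ))) (a j))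
            * inner ℂ v1 (P v2) := by
        intro a; rw [hφap, hpt a]
      rw [integral_congr_ae (Filter.Eventually.of_forall heq), integral_mul_const,
        MeasureTheory.integral_fintype_prod_volume_eq_prod (ι := Fin m)
          (fun j t => F (S * t) * Complex.exp (Complex.I * ((x1 j - x2 j : ℝ) : ℂ) * (t : ℂ)))]
      obtain ⟨j0, hj0⟩ := hsep
      have hzero : (∫ t : ℝ, F (S * t) *
          Complex.exp (Complex.I * ((x1 j0 - x2 j0 : ℝ) : ℂ) * (t : ℂ))) = 0 := by
        set d : ℝ := x1 j0 - x2 j0 with hd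
        have hS' : S ≠ 0 := ne_of_gt hS
        have hrw : ∀ t : ℝ, F (S * t) * Complex.exp (Complex.I * (d : ℂ) * (t : ℂ))
            = (fun u : ℝ => F u *
                Complex.exp (-(Complex.I * ((-(d/S) : ℝ) : ℂ) * (u : ℂ)))) (S * t) := by
          intro t
          simp only
          congr 2
          push_cast
          have hSC : (S : ℂ) ≠ 0 := Complex.ofReal_ne_zero.mpr hS'
          field_simp
        rw [integral_congr_ae (Filter.Eventually.of_forall hrw),
          MeasureTheory.Measure.integral_comp_mul_left (fun u : ℝ => F u * Complex.exp (-(Complex.I * ((-(d/S) : ℝ) : ℂ) * (u : ℂ)))) S, hFhat (-(d/S)) (by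
            rw [abs_neg, abs_div, abs_of_pos hS, le_div_iff₀ hS, one_mul]
            exact hj0), smul_zero]
      rw [Finset.prod_eq_zero (Finset.mem_univ j0) hzero, zero_mul]
    rw [ContinuousLinearMap.smul_apply]
    have hco : (S ^ m : ℝ) • ((∫ a, f a) v2) = ((S ^ m : ℝ) : ℂ) • ((∫ a, f a) v2) :=
      RCLike.real_smul_eq_coe_smul (K := ℂ) _ _
    rw [hco, inner_smul_right, hmain, mul_zero]
  · rw [integral_undef hInt]
    simp
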